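/- Let D ⊆ ℂⁿ be a bounded domain, z₀ ∈ D, and f: D → D holomorphic with f(z₀) = z₀. Then the family of linear maps {(f'(z₀))ᵏ : k ∈ ℕ} is bounded in operator norm; consequently f'(z₀) has spectral radius at most 1, and any eigenvalue λ with |λ| = 1 is semisimple (its geometric and algebraic multiplicities agree). -/

import Mathlib

open Metric Set

/-- Cauchy/Schwarz-type estimate: a holomorphic self-map of a bounded set fixing `z₀`
has derivative at `z₀` of norm at most `(2*M+1)/r`. -/
lemma aux_fderiv_bound {n : ℕ} {D : Set (Fin n → ℂ)} {z₀ : Fin n → ℂ} {r M : ℝ}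
    (hr : 0 < r) (hball : ball z₀ r ⊆ D) (hM : ∀ z ∈ D, ‖z‖ ≤ M)
    {g : (Fin n → ℂ) → (Fin n → ℂ)} (hg : DifferentiableOn ℂ g D)
    (hgD : Set.MapsTo g D D) (hgz : g z₀ = z₀) :
    ‖fderiv ℂ g z₀‖ ≤ (2 * M + 1) / r := by
  have hz₀D : z₀ ∈ D := hball (mem_ball_self hr)
  have hM0 : 0 ≤ M := le_trans (norm_nonneg z₀) (hM z₀ hz₀D)
  refine ContinuousLinearMap.opNorm_le_bound _ (by positivity) fun v => ?_
  rcases eq_or_ne v 0 with rfl | hv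
  · simp
  have hc : 0 < ‖v‖ := norm_pos_iff.mpr hv
  set h : ℂ → (Fin n → ℂ) := fun ζ => g (z₀ + ζ • v) with hh
  have hmem : ∀ ζ ∈ ball (0 : ℂ) (r / ‖v‖), z₀ + ζ • v ∈ D := by
    intro ζ hζ
    apply hball
    simp only [mem_ball, dist_eq_norm, add_sub_cancel_left, norm_smul, sub_zero] at *
    calc ‖ζ‖ * ‖v‖ < (r / ‖v‖) * ‖v‖ := mul_lt_mul_of_pos_right hζ hc
      _ = r := div_mul_cancel₀ r hc.ne'
  have hA : ∀ ζ : ℂ, HasDerivAt (fun ζ : ℂ => z₀ + ζ • v) v ζ := by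
    intro ζ
    simpa using ((hasDerivAt_id ζ).smul_const v).const_add z₀
  have hdiff : DifferentiableOn ℂ h (ball (0 : ℂ) (r / ‖v‖)) := by
    intro ζ hζ
    exact ((hg (z₀ + ζ • v) (hmem ζ hζ)).comp ζ
      ((hA ζ).differentiableAt.differentiableWithinAt) (fun w hw => hmem w hw))
  have hmaps : Set.MapsTo h (ball (0 : ℂ) (r / ‖v‖)) (ball (h 0) (2 * M + 1)) := by
    intro ζ hζ
    have h1 : h ζ ∈ D := hgD (hmem ζ hζ)
    have h0 : h 0 = z₀ := by simp [hh, hgz]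
    rw [h0]
    simp only [mem_ball, dist_eq_norm]
    calc ‖h ζ - z₀‖ ≤ ‖h ζ‖ + ‖z₀‖ := norm_sub_le _ _
      _ ≤ M + M := add_le_add (hM _ h1) (hM _ hz₀D)
      _ < 2 * M + 1 := by linarith
  have hest := Complex.norm_deriv_le_div_of_mapsTo_ball hdiff (hmaps.mono_right ball_subset_closedBall) (div_pos hr hc)
  have hgd : DifferentiableAt ℂ g z₀ :=
    (hg.mono hball).differentiableAt (isOpen_ball.mem_nhds (mem_ball_self hr))
  have hz00 : z₀ + (0 : ℂ) • v = z₀ := by simp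
  have hD0 : HasDerivAt h (fderiv ℂ g z₀ v) 0 := by
    have hg0 : HasFDerivAt g (fderiv ℂ g z₀) (z₀ + (0 : ℂ) • v) := by
      rw [hz00]; exact hgd.hasFDerivAt
    exact hg0.comp_hasDerivAt 0 (hA 0)
  rw [hD0.deriv] at hest
  calc ‖fderiv ℂ g z₀ v‖ ≤ (2 * M + 1) / (r / ‖v‖) := hest
    _ = (2 * M + 1) / r * ‖v‖ := by field_simp

/-- If `f : D → D` is holomorphic on a bounded domain with `f(z₀) = z₀`,
then the powers of `f'(z₀)` are uniformly bounded in operator norm; consequently the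
spectral radius of `f'(z₀)` is at most `1` and every unimodular eigenvalue is semisimple
(its eigenspace equals its generalized eigenspace). -/
theorem stmt_11 {n : ℕ} (D : Set (Fin n → ℂ)) (hDo : IsOpen D) (hDc : IsConnected D)
    (hDb : Bornology.IsBounded D)
    (f : (Fin n → ℂ) → (Fin n → ℂ)) (hf : DifferentiableOn ℂ f D)
    (hfD : Set.MapsTo f D D) (z₀ : Fin n → ℂ) (hz₀ : z₀ ∈ D) (hfix : f z₀ = z₀) :
    (∃ B : ℝ, ∀ k : ℕ, ‖(fderiv ℂ f z₀) ^ k‖ ≤ B) ∧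
    spectralRadius ℂ (fderiv ℂ f z₀) ≤ 1 ∧
    ∀ μ : ℂ, ‖μ‖ = 1 →
      Module.End.eigenspace (fderiv ℂ f z₀).toLinearMap μ =
        Module.End.maxGenEigenspace (fderiv ℂ f z₀).toLinearMap μ := by
  set T := fderiv ℂ f z₀ with hT
  obtain ⟨M, hM⟩ := isBounded_iff_forall_norm_le.mp hDb
  obtain ⟨r, hr, hball⟩ := Metric.isOpen_iff.mp hDo z₀ hz₀
  have hiter : ∀ k : ℕ, DifferentiableOn ℂ (f^[k]) D ∧ fderiv ℂ (f^[k]) z₀ = T ^ k := by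
    intro k
    induction k with
    | zero =>
      refine ⟨by simpa using differentiableOn_id, ?_⟩
      simp only [Function.iterate_zero, pow_zero, fderiv_id]
      rfl
    | succ k ih =>
      have hmaps : Set.MapsTo (f^[k]) D D := hfD.iterate k
      have hfix' : f^[k] z₀ = z₀ := Function.iterate_fixed hfix k
      have hdk : DifferentiableAt ℂ (f^[k]) z₀ := ih.1.differentiableAt (hDo.mem_nhds hz₀)
      refine ⟨?_, ?_⟩
      · rw [Function.iterate_succ']
        exact hf.comp ih.1 hmaps
      · rw [Function.iterate_succ']
        have hcomp : fderiv ℂ (f ∘ f^[k]) z₀ =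
            (fderiv ℂ f (f^[k] z₀)).comp (fderiv ℂ (f^[k]) z₀) :=
          fderiv_comp z₀ (by rw [hfix']; exact hf.differentiableAt (hDo.mem_nhds hz₀)) hdk
        rw [hcomp, hfix', ih.2, pow_succ']
        rfl
  have hbound : ∀ k : ℕ, ‖T ^ k‖ ≤ (2 * M + 1) / r := by
    intro k
    rw [← (hiter k).2]
    exact aux_fderiv_bound hr hball hM (hiter k).1 (hfD.iterate k)
      (Function.iterate_fixed hfix k)
  set B := (2 * M + 1) / r with hB
  refine ⟨⟨B, hbound⟩, ?_, ?_⟩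
  · -- spectral radius ≤ 1
    rw [spectralRadius]
    refine iSup₂_le fun μ hμ => ?_
    suffices h : ‖μ‖ ≤ 1 by
      rw [← ENNReal.coe_one]
      exact_mod_cast (by exact_mod_cast h : ‖μ‖₊ ≤ 1)
    by_contra hgt
    push_neg at hgt
    have hgrow : ∀ k : ℕ, ‖μ‖ ^ k ≤ B * ‖(1 : (Fin n → ℂ) →L[ℂ] (Fin n → ℂ))‖ := by
      intro k
      have hmem : μ ^ k ∈ spectrum ℂ (T ^ k) :=
        spectrum.pow_image_subset T k ⟨μ, hμ, rfl⟩
      calc ‖μ‖ ^ k = ‖μ ^ k‖ := (norm_pow μ k).symm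
        _ ≤ ‖T ^ k‖ * ‖(1 : (Fin n → ℂ) →L[ℂ] (Fin n → ℂ))‖ :=
            spectrum.norm_le_norm_mul_of_mem hmem
        _ ≤ B * ‖(1 : (Fin n → ℂ) →L[ℂ] (Fin n → ℂ))‖ :=
            mul_le_mul_of_nonneg_right (hbound k) (norm_nonneg _)
    obtain ⟨k, hk⟩ := ((tendsto_pow_atTop_atTop_of_one_lt hgt).eventually_gt_atTop
      (B * ‖(1 : (Fin n → ℂ) →L[ℂ] (Fin n → ℂ))‖)).exists
    exact absurd (hgrow k) (not_le.mpr hk)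
  · -- semisimplicity
    intro μ hμ
    set L := T.toLinearMap with hL
    set N : Module.End ℂ (Fin n → ℂ) := L - μ • 1 with hN
    have key : ∀ x, N (N x) = 0 → N x = 0 := by
      intro x hx
      set y := N x with hy
      have hLx : L x = μ • x + y := by
        simp only [hy, hN, LinearMap.sub_apply, LinearMap.smul_apply, Module.End.one_apply]
        abel
      have hLy : L y = μ • y := by
        have h0 : L y - μ • y = 0 := by
          simpa only [hN, LinearMap.sub_apply, LinearMap.smul_apply,
            Module.End.one_apply] using hx
        exact sub_eq_zero.mp h0
      have hpow : ∀ k : ℕ, (L ^ (k + 1)) x = μ ^ (k + 1) • x + (((k : ℂ) + 1) * μ ^ k) • y := by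
        intro k
        induction k with
        | zero => simpa using hLx
        | succ k ih =>
          have hstep : (L ^ (k + 2)) x = L ((L ^ (k + 1)) x) := by
            rw [pow_succ']; rfl
          rw [hstep, ih, map_add, map_smul, map_smul, hLx, hLy]
          push_cast
          match_scalars <;> ring
      by_contra hy0
      have hynorm : 0 < ‖y‖ := norm_pos_iff.mpr hy0
      have hbnd : ∀ k : ℕ, ((k : ℝ) + 1) * ‖y‖ ≤ (B + 1) * ‖x‖ := by
        intro k
        have hTL : (L ^ (k + 1)) x = (T ^ (k + 1)) x := by
          rw [hL, ← ContinuousLinearMap.toLinearMap_pow]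
          rfl
        have h1 : ‖(L ^ (k + 1)) x‖ ≤ B * ‖x‖ := by
          rw [hTL]
          exact le_trans ((T ^ (k + 1)).le_opNorm x)
            (mul_le_mul_of_nonneg_right (hbound _) (norm_nonneg _))
        have hcoef : ‖(((k : ℂ) + 1) * μ ^ k) • y‖ = ((k : ℝ) + 1) * ‖y‖ := by
          rw [norm_smul, norm_mul, norm_pow, hμ, one_pow, mul_one]
          congr 1
          have : ((k : ℂ) + 1) = ((k + 1 : ℕ) : ℂ) := by push_cast; ring
          rw [this, Complex.norm_natCast]
          push_cast; ring
        have hsx : ‖μ ^ (k + 1) • x‖ = ‖x‖ := by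
          rw [norm_smul, norm_pow, hμ, one_pow, one_mul]
        have h2 : ((k : ℝ) + 1) * ‖y‖ - ‖x‖ ≤ ‖(L ^ (k + 1)) x‖ := by
          rw [hpow k]
          have h3 : ‖(((k : ℂ) + 1) * μ ^ k) • y‖ ≤
              ‖μ ^ (k + 1) • x + (((k : ℂ) + 1) * μ ^ k) • y‖ + ‖μ ^ (k + 1) • x‖ := by
            have := norm_sub_le (μ ^ (k + 1) • x + (((k : ℂ) + 1) * μ ^ k) • y)
              (μ ^ (k + 1) • x)
            simpa [add_sub_cancel_left] using this
          rw [hcoef, hsx] at h3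
          linarith
        linarith
      obtain ⟨k, hk⟩ := exists_nat_gt ((B + 1) * ‖x‖ / ‖y‖)
      have : (B + 1) * ‖x‖ < (k : ℝ) * ‖y‖ := (div_lt_iff₀ hynorm).mp hk
      have h4 := hbnd k
      nlinarith [hynorm]
    apply le_antisymm
    · intro x hx
      rw [Module.End.eigenspace_def, LinearMap.mem_ker] at hx
      rw [Module.End.mem_maxGenEigenspace]
      exact ⟨1, by simpa using hx⟩
    · intro x hx
      rw [Module.End.mem_maxGenEigenspace] at hx
      obtain ⟨k, hk⟩ := hx
      rw [Module.End.eigenspace_def, LinearMap.mem_ker]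
      have main : ∀ (k : ℕ) (x : Fin n → ℂ), (N ^ k) x = 0 → N x = 0 := by
        intro k
        induction k with
        | zero =>
          intro x hx0
          simp only [pow_zero, Module.End.one_apply] at hx0
          simp [hx0]
        | succ k ih =>
          intro x hx0
          have hNx : (N ^ k) (N x) = 0 := by
            rw [← Module.End.mul_apply, ← pow_succ]
            exact hx0
          exact key x (ih _ hNx)
      exact main k x hk
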